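/- Quantum Ingster–Suslina bound: In the setting of the quantum Ingster–Suslina identity, D_{χ²}(E_θ[ρ_θ^{⊗n}] ‖ σ^{⊗n}) ≤ E_{θ,θ'}[exp(n · tr(σ⁻¹ (ρ_θ − σ)(ρ_{θ'} − σ)))] − 1. -/

import Mathlib

open Matrix
open scoped ComplexOrder

/-- The `n`-fold tensor (Kronecker) power of a matrix, indexed by `Fin n → Fin d`. -/
noncomputable def tensorPow {d : ℕ} (A : Matrix (Fin d) (Fin d) ℂ) (n : ℕ) :
    Matrix (Fin n → Fin d) (Fin n → Fin d) ℂ :=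
  Matrix.of fun x y => ∏ i, A (x i) (y i)

section TensorPowLemmas

variable {d : ℕ}

lemma tensorPow_mul (A B : Matrix (Fin d) (Fin d) ℂ) (n : ℕ) :
    tensorPow A n * tensorPow B n = tensorPow (A * B) n := by
  ext x y
  simp only [tensorPow, Matrix.mul_apply, Matrix.of_apply, ← Finset.prod_mul_distrib]
  exact (Fintype.prod_sum fun i j => A (x i) j * B j (y i)).symm

lemma trace_tensorPow (A : Matrix (Fin d) (Fin d) ℂ) (n : ℕ) :
    (tensorPow A n).trace = A.trace ^ n := by
  show ∑ x : Fin n → Fin d, ∏ i, A (x i) (x i) = (∑ j, A j j) ^ n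
  rw [Fintype.sum_pow]

lemma tensorPow_one (n : ℕ) : tensorPow (1 : Matrix (Fin d) (Fin d) ℂ) n = 1 := by
  ext x y
  show (∏ i, (1 : Matrix (Fin d) (Fin d) ℂ) (x i) (y i)) = (1 : Matrix _ _ ℂ) x y
  by_cases h : x = y
  · subst h; simp [Matrix.one_apply]
  · obtain ⟨i, hi⟩ := Function.ne_iff.mp h
    rw [Matrix.one_apply_ne h]
    exact Finset.prod_eq_zero (Finset.mem_univ i) (Matrix.one_apply_ne hi)

lemma tensorPow_conjTranspose (A : Matrix (Fin d) (Fin d) ℂ) (n : ℕ) :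
    (tensorPow A n)ᴴ = tensorPow Aᴴ n := by
  ext x y
  show star (∏ i, A (y i) (x i)) = ∏ i, Aᴴ (x i) (y i)
  rw [star_prod]
  rfl

lemma tensorPow_posSemidef {A : Matrix (Fin d) (Fin d) ℂ} (hA : A.PosSemidef) (n : ℕ) :
    (tensorPow A n).PosSemidef := by
  obtain ⟨B, rfl⟩ : ∃ B : Matrix (Fin d) (Fin d) ℂ, A = Bᴴ * B := by
    open scoped MatrixOrder in exact CStarAlgebra.nonneg_iff_eq_star_mul_self.mp hA.nonneg
  rw [← tensorPow_mul, ← tensorPow_conjTranspose]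
  exact Matrix.posSemidef_conjTranspose_mul_self _

lemma tensorPow_inv {σ : Matrix (Fin d) (Fin d) ℂ} (hσ : σ.PosDef) (n : ℕ) :
    (tensorPow σ n)⁻¹ = tensorPow σ⁻¹ n := by
  apply Matrix.inv_eq_left_inv
  rw [tensorPow_mul, Matrix.nonsing_inv_mul σ ((Matrix.isUnit_iff_isUnit_det σ).mp hσ.isUnit),
    tensorPow_one]

lemma trace_nonneg_of_posSemidef {k : ℕ} {M : Matrix (Fin k → Fin d) (Fin k → Fin d) ℂ}
    (hM : M.PosSemidef) : 0 ≤ M.trace := by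
  obtain ⟨B, rfl⟩ : ∃ B : Matrix (Fin k → Fin d) (Fin k → Fin d) ℂ, M = Bᴴ * B := by
    open scoped MatrixOrder in exact CStarAlgebra.nonneg_iff_eq_star_mul_self.mp hM.nonneg
  rw [Matrix.trace]
  refine Finset.sum_nonneg fun i _ => ?_
  show (0 : ℂ) ≤ ∑ j, Bᴴ i j * B j i
  refine Finset.sum_nonneg fun j _ => ?_
  show (0 : ℂ) ≤ star (B j i) * B j i
  exact star_mul_self_nonneg _

end TensorPowLemmas

/-- quantum Ingster–Suslina bound:
`D_{χ²}(E_θ[ρ_θ^{⊗n}] ‖ σ^{⊗n}) ≤ E_{θ,θ'}[exp(n · tr(σ⁻¹(ρ_θ−σ)(ρ_{θ'}−σ)))] − 1`. -/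
theorem quantum_ingster_suslina_bound {d m : ℕ} (n : ℕ) (hn : 1 ≤ n)
    (σ : Matrix (Fin d) (Fin d) ℂ) (hσ : σ.PosDef) (hσtr : σ.trace = 1)
    (ρ : Fin m → Matrix (Fin d) (Fin d) ℂ)
    (hρ : ∀ t, (ρ t).PosSemidef) (hρtr : ∀ t, (ρ t).trace = 1)
    (p : Fin m → ℝ) (hp : ∀ t, 0 ≤ p t) (hps : ∑ t, p t = 1) :
    (((tensorPow σ n)⁻¹ *
        ((∑ t, (p t : ℂ) • tensorPow (ρ t) n) * (∑ t, (p t : ℂ) • tensorPow (ρ t) n))).trace).re - 1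
      ≤ (∑ t, ∑ t', p t * p t' *
          Real.exp (n * ((σ⁻¹ * ((ρ t - σ) * (ρ t' - σ))).trace).re)) - 1 := by
  have hdet : IsUnit σ.det := (Matrix.isUnit_iff_isUnit_det σ).mp hσ.isUnit
  have hσinv : σ⁻¹ * σ = 1 := Matrix.nonsing_inv_mul σ hdet
  have hσinv' : σ * σ⁻¹ = 1 := Matrix.mul_nonsing_inv σ hdet
  -- the centered overlap
  set w : Fin m → Fin m → ℂ := fun t t' => ((σ⁻¹ * ((ρ t - σ) * (ρ t' - σ))).trace) with hw
  -- z = 1 + w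
  have hzw : ∀ t t', (σ⁻¹ * (ρ t * ρ t')).trace = 1 + w t t' := by
    intro t t'
    have expand : (ρ t - σ) * (ρ t' - σ) = ρ t * ρ t' - ρ t * σ - σ * ρ t' + σ * σ := by
      noncomm_ring
    have h1 : (σ⁻¹ * (ρ t * σ)).trace = 1 := by
      rw [show σ⁻¹ * (ρ t * σ) = σ⁻¹ * ρ t * σ by rw [mul_assoc],
        Matrix.trace_mul_comm, ← mul_assoc, hσinv', one_mul, hρtr]
    have h2 : (σ⁻¹ * (σ * ρ t')).trace = 1 := by
      rw [← mul_assoc, hσinv, one_mul, hρtr]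
    have h3 : (σ⁻¹ * (σ * σ)).trace = 1 := by
      rw [← mul_assoc, hσinv, one_mul, hσtr]
    rw [hw]
    simp only [expand, Matrix.mul_sub, Matrix.mul_add, Matrix.trace_sub, Matrix.trace_add,
      h1, h2, h3]
    ring
  -- Hermitianness of the centered states
  have hherm : ∀ t, (ρ t - σ).IsHermitian := fun t => ((hρ t).1).sub hσ.1
  -- positivity of the Gram averages
  have hAk : ∀ k : ℕ,
      0 ≤ (∑ t, ∑ t', ((p t : ℂ) * (p t' : ℂ)) * (w t t') ^ k).re := by
    intro k
    -- rewrite as a trace of a PSD matrix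
    set F : Matrix (Fin k → Fin d) (Fin k → Fin d) ℂ :=
      ∑ t, (p t : ℂ) • tensorPow (ρ t - σ) k with hF
    have hFherm : Fᴴ = F := by
      rw [hF, Matrix.conjTranspose_sum]
      refine Finset.sum_congr rfl fun t _ => ?_
      rw [Matrix.conjTranspose_smul, tensorPow_conjTranspose, (hherm t).eq]
      simp [Complex.star_def, Complex.conj_ofReal]
    have hid : (∑ t, ∑ t', ((p t : ℂ) * (p t' : ℂ)) * (w t t') ^ k)
        = (tensorPow σ⁻¹ k * (F * F)).trace := by
      rw [hF, Finset.sum_mul_sum, Matrix.mul_sum, Matrix.trace_sum]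
      refine Finset.sum_congr rfl fun t _ => ?_
      rw [Matrix.mul_sum, Matrix.trace_sum]
      refine Finset.sum_congr rfl fun t' _ => ?_
      simp only [smul_mul_assoc, mul_smul_comm, Matrix.trace_smul, smul_smul, smul_eq_mul]
      rw [tensorPow_mul, tensorPow_mul, trace_tensorPow]
      simp only [hw]
      ring
    have hpos : (0 : ℂ) ≤ (tensorPow σ⁻¹ k * (F * F)).trace := by
      have htr : (tensorPow σ⁻¹ k * (F * F)).trace = (Fᴴ * tensorPow σ⁻¹ k * F).trace := by
        rw [hFherm, ← mul_assoc, Matrix.trace_mul_comm (tensorPow σ⁻¹ k * F) F, ← mul_assoc]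
      rw [htr]
      exact trace_nonneg_of_posSemidef
        ((tensorPow_posSemidef (hσ.inv).posSemidef k).conjTranspose_mul_mul_same F)
    rw [hid]
    exact (Complex.le_def.mp hpos).1
  -- main trace identity
  have hmain : (((tensorPow σ n)⁻¹ *
        ((∑ t, (p t : ℂ) • tensorPow (ρ t) n) * (∑ t, (p t : ℂ) • tensorPow (ρ t) n))).trace)
      = ∑ t, ∑ t', ((p t : ℂ) * (p t' : ℂ)) * (1 + w t t') ^ n := by
    rw [tensorPow_inv hσ, Finset.sum_mul_sum, Matrix.mul_sum, Matrix.trace_sum]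
    refine Finset.sum_congr rfl fun t _ => ?_
    rw [Matrix.mul_sum, Matrix.trace_sum]
    refine Finset.sum_congr rfl fun t' _ => ?_
    simp only [smul_mul_assoc, mul_smul_comm, Matrix.trace_smul, smul_smul, smul_eq_mul]
    rw [tensorPow_mul, tensorPow_mul, trace_tensorPow, hzw]
    ring
  -- reduce to the core inequality
  rw [hmain]
  apply sub_le_sub_right
  rw [Complex.re_sum]
  simp only [Complex.re_sum]
  have hterm : ∀ t t', (((p t : ℂ) * (p t' : ℂ)) * (1 + w t t') ^ n).re
      = (p t * p t') * ((1 + w t t') ^ n).re := by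
    intro t t'
    rw [show ((p t : ℂ) * (p t' : ℂ)) = ((p t * p t' : ℝ) : ℂ) by push_cast; ring,
      Complex.re_ofReal_mul]
  -- core inequality
  calc ∑ t, ∑ t', (((p t : ℂ) * (p t' : ℂ)) * (1 + w t t') ^ n).re
      = ∑ t, ∑ t', (p t * p t') * ((1 + w t t') ^ n).re := by
        exact Finset.sum_congr rfl fun t _ => Finset.sum_congr rfl fun t' _ => hterm t t'
    _ ≤ ∑ t, ∑ t', p t * p t' * Real.exp (n * (w t t').re) := by
        -- the analytic core
        set S : ℕ → ℝ := fun k => ∑ t, ∑ t', (p t * p t') * ((w t t' ^ k).re) with hSdef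
        have hre2 : ∀ (a b : ℝ) (ζ : ℂ), ((a:ℂ) * (b:ℂ) * ζ).re = a * b * ζ.re := by
          intro a b ζ
          rw [show ((a:ℂ) * (b:ℂ)) = ((a * b : ℝ) : ℂ) by push_cast; ring,
            Complex.re_ofReal_mul]
        have hS0 : ∀ k, 0 ≤ S k := by
          intro k
          have h := hAk k
          simpa only [Complex.re_sum, hre2] using h
        -- binomial expansion
        have hbin : ∀ ζ : ℂ, (1 + ζ) ^ n
            = ∑ k ∈ Finset.range (n+1), ((n.choose k : ℝ) : ℂ) * ζ ^ k := by
          intro ζ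
          rw [add_comm, add_pow]
          exact Finset.sum_congr rfl fun k _ => by push_cast; ring
        have h1 : ∀ t t', p t * p t' * ((1 + w t t') ^ n).re
            = ∑ k ∈ Finset.range (n+1), (n.choose k : ℝ) * (p t * p t' * ((w t t' ^ k).re)) := by
          intro t t'
          rw [hbin, Complex.re_sum, Finset.mul_sum]
          exact Finset.sum_congr rfl fun k _ => by rw [Complex.re_ofReal_mul]; ring
        have stepa : ∑ t, ∑ t', (p t * p t') * (((1 + w t t') ^ n).re)
            = ∑ k ∈ Finset.range (n+1), (n.choose k : ℝ) * S k := by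
          simp only [h1]
          calc ∑ t, ∑ t', ∑ k ∈ Finset.range (n+1),
                (n.choose k : ℝ) * (p t * p t' * ((w t t' ^ k).re))
              = ∑ t, ∑ k ∈ Finset.range (n+1), ∑ t',
                (n.choose k : ℝ) * (p t * p t' * ((w t t' ^ k).re)) :=
                Finset.sum_congr rfl fun t _ => Finset.sum_comm
            _ = ∑ k ∈ Finset.range (n+1), ∑ t, ∑ t',
                (n.choose k : ℝ) * (p t * p t' * ((w t t' ^ k).re)) := Finset.sum_comm
            _ = ∑ k ∈ Finset.range (n+1), (n.choose k : ℝ) * S k := by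
                refine Finset.sum_congr rfl fun k _ => ?_
                rw [hSdef, Finset.mul_sum]
                exact Finset.sum_congr rfl fun t _ => by rw [Finset.mul_sum]
        -- uniform bound for summability
        set R : ℝ := ∑ t, ∑ t', ‖w t t'‖ with hRdef
        have hRb : ∀ t t', ‖w t t'‖ ≤ R := by
          intro t t'
          calc ‖w t t'‖ ≤ ∑ s', ‖w t s'‖ :=
                Finset.single_le_sum (fun s' _ => (norm_nonneg _)) (Finset.mem_univ t')
            _ ≤ R := Finset.single_le_sum
                (f := fun s => ∑ s', ‖w s s'‖)
                (fun s _ => Finset.sum_nonneg fun s' _ => (norm_nonneg _))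
                (Finset.mem_univ t)
        have hR0 : 0 ≤ R :=
          Finset.sum_nonneg fun t _ => Finset.sum_nonneg fun t' _ => norm_nonneg _
        have hSR : ∀ k, S k ≤ R ^ k := by
          intro k
          have hsum : ∑ t, ∑ t', (p t * p t') * R ^ k = R ^ k := by
            calc ∑ t, ∑ t', (p t * p t') * R ^ k
                = ((∑ t, p t) * (∑ t', p t')) * R ^ k := by
                  rw [Finset.sum_mul_sum, Finset.sum_mul]
                  exact Finset.sum_congr rfl fun t _ => by rw [Finset.sum_mul]
              _ = R ^ k := by rw [hps]; ring
          calc S k ≤ ∑ t, ∑ t', (p t * p t') * R ^ k := by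
                refine Finset.sum_le_sum fun t _ => Finset.sum_le_sum fun t' _ => ?_
                refine mul_le_mul_of_nonneg_left ?_ (mul_nonneg (hp t) (hp t'))
                calc (w t t' ^ k).re ≤ ‖w t t' ^ k‖ := Complex.re_le_norm _
                  _ = ‖w t t'‖ ^ k := by rw [norm_pow]
                  _ ≤ R ^ k := pow_le_pow_left₀ (norm_nonneg _) (hRb t t') k
            _ = R ^ k := hsum
        set g : ℕ → ℝ := fun k => ((n : ℝ) ^ k / (Nat.factorial k : ℝ)) * S k with hgdef
        have hg0 : ∀ k, 0 ≤ g k := fun k =>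
          mul_nonneg (div_nonneg (pow_nonneg (Nat.cast_nonneg n) k) (Nat.cast_nonneg _)) (hS0 k)
        have hgsummable : Summable g := by
          refine Summable.of_nonneg_of_le hg0 (fun k => ?_)
            ((Real.summable_pow_div_factorial ((n : ℝ) * R)))
          calc g k ≤ ((n : ℝ) ^ k / (Nat.factorial k : ℝ)) * R ^ k := by
                refine mul_le_mul_of_nonneg_left (hSR k) ?_
                exact div_nonneg (pow_nonneg (Nat.cast_nonneg n) k) (Nat.cast_nonneg _)
            _ = ((n : ℝ) * R) ^ k / (Nat.factorial k : ℝ) := by rw [mul_pow]; ring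
        -- summability of complex exp series
        have hsumC : ∀ ζ : ℂ, Summable (fun k : ℕ => ζ ^ k / (Nat.factorial k : ℂ)) := fun ζ =>
          NormedSpace.expSeries_div_summable ζ
        have hexp : ∀ ζ : ℂ, (Complex.exp ζ).re = ∑' k : ℕ, (ζ ^ k / (Nat.factorial k : ℂ)).re := by
          intro ζ
          rw [Complex.exp_eq_exp_ℂ, NormedSpace.exp_eq_tsum_div]
          exact Complex.re_tsum (hsumC ζ)
        have hcoeff : ∀ k : ℕ, ∀ ζ : ℂ, ((n : ℂ) * ζ) ^ k / (Nat.factorial k : ℂ)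
            = (((n : ℝ) ^ k / (Nat.factorial k : ℝ) : ℝ) : ℂ) * ζ ^ k := by
          intro k ζ
          push_cast
          ring
        have hsumR : ∀ t t', Summable (fun k : ℕ =>
            (p t * p t') * ((((n : ℂ) * w t t') ^ k / (Nat.factorial k : ℂ)).re)) := by
          intro t t'
          exact ((Complex.hasSum_re (hsumC ((n:ℂ) * w t t')).hasSum).summable).mul_left _
        have stepd : ∑ t, ∑ t', (p t * p t') * ((Complex.exp ((n : ℂ) * w t t')).re)
            = ∑' k, g k := by
          have h1 : ∀ t t', (p t * p t') * ((Complex.exp ((n : ℂ) * w t t')).re)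
              = ∑' k : ℕ, (p t * p t') * ((((n : ℂ) * w t t') ^ k / (Nat.factorial k : ℂ)).re) := by
            intro t t'
            rw [hexp, tsum_mul_left]
          calc ∑ t, ∑ t', (p t * p t') * ((Complex.exp ((n : ℂ) * w t t')).re)
              = ∑ t, ∑ t', ∑' k : ℕ, (p t * p t') * ((((n : ℂ) * w t t') ^ k / (Nat.factorial k : ℂ)).re) := by
                exact Finset.sum_congr rfl fun t _ => Finset.sum_congr rfl fun t' _ => h1 t t'
            _ = ∑ t, ∑' k : ℕ, ∑ t', (p t * p t') * ((((n : ℂ) * w t t') ^ k / (Nat.factorial k : ℂ)).re) := by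
                exact Finset.sum_congr rfl fun t _ =>
                  (Summable.tsum_finsetSum (fun t' _ => hsumR t t')).symm
            _ = ∑' k : ℕ, ∑ t, ∑ t', (p t * p t') * ((((n : ℂ) * w t t') ^ k / (Nat.factorial k : ℂ)).re) := by
                refine (Summable.tsum_finsetSum (fun t _ => ?_)).symm
                exact summable_sum fun t' _ => hsumR t t'
            _ = ∑' k, g k := by
                refine tsum_congr fun k => ?_
                simp only [hgdef, hcoeff k, Complex.re_ofReal_mul, hSdef, Finset.mul_sum]
                exact Finset.sum_congr rfl fun t _ =>
                  Finset.sum_congr rfl fun t' _ => by ring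
        have stepe : ∀ t t', (Complex.exp ((n : ℂ) * w t t')).re
            ≤ Real.exp ((n : ℝ) * (w t t').re) := by
          intro t t'
          calc (Complex.exp ((n : ℂ) * w t t')).re
              ≤ ‖Complex.exp ((n : ℂ) * w t t')‖ := Complex.re_le_norm _
            _ = Real.exp (((n : ℂ) * w t t').re) := Complex.norm_exp _
            _ = Real.exp ((n : ℝ) * (w t t').re) := by
                congr 1
                simp [Complex.mul_re]
        calc ∑ t, ∑ t', (p t * p t') * (((1 + w t t') ^ n).re)
            = ∑ k ∈ Finset.range (n+1), (n.choose k : ℝ) * S k := stepa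
          _ ≤ ∑ k ∈ Finset.range (n+1), ((n : ℝ) ^ k / (Nat.factorial k : ℝ)) * S k := by
              refine Finset.sum_le_sum fun k _ => ?_
              exact mul_le_mul_of_nonneg_right (Nat.choose_le_pow_div k n) (hS0 k)
          _ ≤ ∑' k, g k := Summable.sum_le_tsum (Finset.range (n+1)) (fun k _ => hg0 k) hgsummable
          _ = ∑ t, ∑ t', (p t * p t') * ((Complex.exp ((n : ℂ) * w t t')).re) := stepd.symm
          _ ≤ ∑ t, ∑ t', p t * p t' * Real.exp ((n : ℝ) * (w t t').re) := by
              refine Finset.sum_le_sum fun t _ => Finset.sum_le_sum fun t' _ => ?_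
              exact mul_le_mul_of_nonneg_left (stepe t t') (mul_nonneg (hp t) (hp t'))
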